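/- In the group B₁₃ presented by ⟨a,b,c | bcab = cabc, abcab = cabca⟩, the element Δ = (abc)³ is central. -/

import Mathlib

/-- Relations of the braid group of `G₁₃`: `⟨a,b,c | bcab = cabc, abcab = cabca⟩`,
with generators indexed `0 ↦ a`, `1 ↦ b`, `2 ↦ c`. -/
def B13Rels : Set (FreeGroup (Fin 3)) :=
  let a := FreeGroup.of (0 : Fin 3)
  let b := FreeGroup.of (1 : Fin 3)
  let c := FreeGroup.of (2 : Fin 3)
  {b * c * a * b * (c * a * b * c)⁻¹, a * b * c * a * b * (c * a * b * c * a)⁻¹}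

/-- The key group-theoretic computation. -/
lemma b13_key {G : Type*} [Group G] (a b c : G)
    (h1 : b * c * a * b = c * a * b * c)
    (h2 : a * b * c * a * b = c * a * b * c * a) :
    (a*b*c)^3 * a = a * (a*b*c)^3 ∧ (a*b*c)^3 * b = b * (a*b*c)^3 ∧
      (a*b*c)^3 * c = c * (a*b*c)^3 := by
  -- a commutes with x := c*a*b*c
  have hax : a * (c*a*b*c) = c*a*b*c*a := by
    calc a * (c*a*b*c) = a * (b*c*a*b) := by rw [← h1]
      _ = a*b*c*a*b := by simp only [mul_assoc]
      _ = c*a*b*c*a := h2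
  have hxxa : (c*a*b*c) * (c*a*b*c*a) = a * ((c*a*b*c) * (c*a*b*c)) := by
    calc (c*a*b*c) * (c*a*b*c*a) = (c*a*b*c) * (a * (c*a*b*c)) := by rw [hax]
      _ = ((c*a*b*c) * a) * (c*a*b*c) := by simp only [mul_assoc]
      _ = (c*a*b*c*a) * (c*a*b*c) := by simp only [mul_assoc]
      _ = (a * (c*a*b*c)) * (c*a*b*c) := by rw [← hax]
      _ = a * ((c*a*b*c) * (c*a*b*c)) := by simp only [mul_assoc]
  have hΔ2 : (a*b*c)^3 = a * ((c*a*b*c) * (c*a*b*c)) := by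
    calc (a*b*c)^3 = (a*b*c*a*b) * (c*a*b*c) := by
          simp only [pow_succ, pow_zero, one_mul, mul_assoc]
      _ = (c*a*b*c*a) * (c*a*b*c) := by rw [h2]
      _ = (c*a*b*c) * (a * (c*a*b*c)) := by simp only [mul_assoc]
      _ = (c*a*b*c) * (c*a*b*c*a) := by rw [hax]
      _ = a * ((c*a*b*c) * (c*a*b*c)) := hxxa
  have hΔ1 : (a*b*c)^3 = (c*a*b*c) * (c*a*b*c*a) := hΔ2.trans hxxa.symm
  -- the element w := c*a*b
  have h2' : (a*b) * (c*a*b) = (c*a*b) * (c*a) := by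
    calc (a*b) * (c*a*b) = a*b*c*a*b := by simp only [mul_assoc]
      _ = c*a*b*c*a := h2
      _ = (c*a*b) * (c*a) := by simp only [mul_assoc]
  have hw2 : (c*a*b) * (c*a*b) = c * ((c*a*b) * (c*a)) := by
    calc (c*a*b) * (c*a*b) = c * ((a*b) * (c*a*b)) := by simp only [mul_assoc]
      _ = c * ((c*a*b) * (c*a)) := by rw [h2']
  have hw3 : (c*a*b) * ((c*a*b) * (c*a*b)) = (a*b*c)^3 := by
    calc (c*a*b) * ((c*a*b) * (c*a*b)) = (c*a*b) * (c * ((c*a*b) * (c*a))) := by rw [hw2]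
      _ = (c*a*b*c) * (c*a*b*c*a) := by simp only [mul_assoc]
      _ = (a*b*c)^3 := hΔ1.symm
  have hA : (a*b*c)^3 * a = a * (a*b*c)^3 := by
    calc (a*b*c)^3 * a = (c*a*b*c) * (c*a*b*c*a) * a := by rw [hΔ1]
      _ = (c*a*b*c) * ((c*a*b*c) * (a * a)) := by simp only [mul_assoc]
      _ = a * ((c*a*b*c) * (c*a*b*c)) * a := by
          rw [hΔ1] at *
          calc (c*a*b*c) * ((c*a*b*c) * (a * a)) = ((c*a*b*c) * (c*a*b*c*a)) * a := by
                simp only [mul_assoc]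
            _ = (a * ((c*a*b*c) * (c*a*b*c))) * a := by rw [hxxa]
      _ = a * (a * ((c*a*b*c) * (c*a*b*c))) := by
          calc a * ((c*a*b*c) * (c*a*b*c)) * a
              = a * ((c*a*b*c) * (c*a*b*c*a)) := by simp only [mul_assoc]
            _ = a * (a * ((c*a*b*c) * (c*a*b*c))) := by rw [hxxa]
      _ = a * (a*b*c)^3 := by rw [← hΔ2]
  have hC : (a*b*c)^3 * c = c * (a*b*c)^3 := by
    have hfree : c * (a*b*c)^3 = ((c*a*b) * ((c*a*b) * (c*a*b))) * c := by
      simp only [pow_succ, pow_zero, one_mul, mul_assoc]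
    rw [hfree, hw3]
  have hAB : (a*b*c)^3 * (a*b) = (a*b) * (a*b*c)^3 := by
    have hfree2 : (a*b) * ((c*a*b) * ((c*a*b) * (c*a*b))) = (a*b*c)^3 * (a*b) := by
      simp only [pow_succ, pow_zero, one_mul, mul_assoc]
    rw [← hfree2, hw3]
  have hB : (a*b*c)^3 * b = b * (a*b*c)^3 := by
    have key : a * ((a*b*c)^3 * b) = a * (b * (a*b*c)^3) := by
      calc a * ((a*b*c)^3 * b) = (a * (a*b*c)^3) * b := by simp only [mul_assoc]
        _ = ((a*b*c)^3 * a) * b := by rw [hA]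
        _ = (a*b*c)^3 * (a*b) := by simp only [mul_assoc]
        _ = (a*b) * (a*b*c)^3 := hAB
        _ = a * (b * (a*b*c)^3) := by simp only [mul_assoc]
    exact mul_left_cancel key
  exact ⟨hA, hB, hC⟩

/-- In `B₁₃`, the element `Δ = (abc)³` is central. -/
theorem stmt_15 :
    let a := PresentedGroup.of (rels := B13Rels) (0 : Fin 3)
    let b := PresentedGroup.of (rels := B13Rels) (1 : Fin 3)
    let c := PresentedGroup.of (rels := B13Rels) (2 : Fin 3)
    let Δ := (a * b * c) ^ 3
    Δ * a = a * Δ ∧ Δ * b = b * Δ ∧ Δ * c = c * Δ := by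
  intro a b c Δ
  have key : ∀ r ∈ B13Rels, PresentedGroup.mk B13Rels r = 1 := fun r hr =>
    (QuotientGroup.eq_one_iff _).2 (Subgroup.subset_normalClosure hr)
  have mem1 : (FreeGroup.of 1 * FreeGroup.of 2 * FreeGroup.of 0 * FreeGroup.of 1 *
      (FreeGroup.of 2 * FreeGroup.of 0 * FreeGroup.of 1 * FreeGroup.of 2)⁻¹ : FreeGroup (Fin 3))
      ∈ B13Rels := by
    simp [B13Rels]
  have mem2 : (FreeGroup.of 0 * FreeGroup.of 1 * FreeGroup.of 2 * FreeGroup.of 0 * FreeGroup.of 1 *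
      (FreeGroup.of 2 * FreeGroup.of 0 * FreeGroup.of 1 * FreeGroup.of 2 * FreeGroup.of 0)⁻¹ :
      FreeGroup (Fin 3)) ∈ B13Rels := by
    simp [B13Rels]
  have h1 : b * c * a * b = c * a * b * c := by
    have h := key _ mem1
    rw [map_mul, map_inv, mul_inv_eq_one] at h
    simp only [map_mul] at h
    exact h
  have h2 : a * b * c * a * b = c * a * b * c * a := by
    have h := key _ mem2
    rw [map_mul, map_inv, mul_inv_eq_one] at h
    simp only [map_mul] at h
    exact h
  exact b13_key a b c h1 h2
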